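/- Let ε > 0 and let F : Π_ε → ℂ be holomorphic and injective with F(z+1) = F(z)+1, F(ℝ) ⊆ ℝ, and F strictly increasing on ℝ. Then F maps the open upper half-strip {z : 0 < Im z < ε} into {z : Im z ≥ 0}. Moreover, suppose additionally that F(Π_ε) ⊆ Π_{ε'} for some ε' > 0, and let ζ ∈ ℂ with 0 < Im ζ and ε' + Im ζ ≤ ε; set G(z) = F(z) + ζ (the lift of R_ζ ∘ F). Then for every n ≥ 1 the iterate G^n(0) is defined, lies in Π_ε, and satisfies Im G^n(0) ≥ Im ζ > 0; consequently 0 is not an accumulation point of its own forward orbit under G. -/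

import Mathlib

open Filter Set Topology

/-- The horizontal strip `Π_ε = {z : |Im z| < ε}` (a lift of the cylinder). -/
def Strip (ε : ℝ) : Set ℂ := {z : ℂ | |z.im| < ε}

/-- A real-symmetric univalent circle-map lift maps the open upper half-strip into the
closed upper half-plane; and after composing with a rotation `R_ζ`, `Im ζ > 0`, the orbit
of `0` stays in the strip with imaginary part at least `Im ζ`, hence `0` does not
accumulate on its own forward orbit. -/
theorem upper_strip_invariance_and_orbit (ε : ℝ) (hε : 0 < ε) (F : ℂ → ℂ)
    (hF : DifferentiableOn ℂ F (Strip ε)) (hinj : Set.InjOn F (Strip ε))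
    (hper : ∀ z ∈ Strip ε, F (z + 1) = F z + 1)
    (hreal : ∀ x : ℝ, (F (x : ℂ)).im = 0)
    (hmono : StrictMono fun x : ℝ => (F (x : ℂ)).re) :
    (∀ z : ℂ, 0 < z.im → z.im < ε → 0 ≤ (F z).im) ∧
    (∀ ε' : ℝ, 0 < ε' → (∀ z ∈ Strip ε, F z ∈ Strip ε') →
      ∀ ζ : ℂ, 0 < ζ.im → ε' + ζ.im ≤ ε →
        (∀ n : ℕ, 1 ≤ n →
          (fun z => F z + ζ)^[n] 0 ∈ Strip ε ∧ ζ.im ≤ ((fun z => F z + ζ)^[n] 0).im) ∧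
        ∃ δ > (0:ℝ), ∀ n : ℕ, 1 ≤ n → δ ≤ ‖(fun z => F z + ζ)^[n] 0‖) := by
  -- basic facts about the strip
  have hS : IsOpen (Strip ε) := by
    have : Strip ε = (fun z : ℂ => |z.im|) ⁻¹' Iio ε := rfl
    rw [this]
    exact (continuous_abs.comp Complex.continuous_im).isOpen_preimage _ isOpen_Iio
  have hRe : ∀ x : ℝ, (x : ℂ) ∈ Strip ε := by
    intro x
    simp only [Strip, mem_setOf_eq, Complex.ofReal_im, abs_zero]
    exact hε
  -- the real trace of F
  set f : ℝ → ℝ := fun x => (F (x : ℂ)).re with hf_def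
  have hfc : Continuous f :=
    Complex.continuous_re.comp
      (hF.continuousOn.comp_continuous Complex.continuous_ofReal hRe)
  have hf1 : ∀ x : ℝ, f (x + 1) = f x + 1 := by
    intro x
    have h := hper (x : ℂ) (hRe x)
    have : ((x + 1 : ℝ) : ℂ) = (x : ℂ) + 1 := by push_cast; ring
    simp only [hf_def, this, h, Complex.add_re, Complex.one_re]
  have hfz : ∀ n : ℤ, f n = f 0 + n := by
    intro n
    induction n using Int.induction_on with
    | zero => simp
    | succ n ih =>
      have h := hf1 (n : ℝ)
      push_cast at h ih ⊢
      linarith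
    | pred n ih =>
      have h := hf1 (-(n : ℝ) - 1)
      have e : -(n : ℝ) - 1 + 1 = -(n : ℝ) := by ring
      rw [e] at h
      push_cast at h ih ⊢
      linarith
  have hmonof : Monotone f := hmono.monotone
  have htop : Tendsto f atTop atTop := by
    apply tendsto_atTop_mono (f := fun x : ℝ => f 0 + (x - 1))
    · intro x
      have h1 : f (⌊x⌋ : ℝ) ≤ f x := hmonof (Int.floor_le x)
      have h2 : f ((⌊x⌋ : ℤ) : ℝ) = f 0 + (⌊x⌋ : ℝ) := hfz ⌊x⌋
      have h3 : x - 1 < (⌊x⌋ : ℝ) := Int.sub_one_lt_floor x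
      have : f ((⌊x⌋ : ℤ) : ℝ) = f (⌊x⌋ : ℝ) := rfl
      linarith
    · exact tendsto_atTop_add_const_left _ _
        (tendsto_atTop_add_const_right _ _ tendsto_id)
  have hbot : Tendsto f atBot atBot := by
    apply tendsto_atBot_mono (f := fun x : ℝ => f 0 + (x + 1))
    · intro x
      have h1 : f x ≤ f (⌈x⌉ : ℝ) := hmonof (Int.le_ceil x)
      have h2 : f ((⌈x⌉ : ℤ) : ℝ) = f 0 + (⌈x⌉ : ℝ) := hfz ⌈x⌉
      have h3 : (⌈x⌉ : ℝ) < x + 1 := Int.ceil_lt_add_one x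
      have : f ((⌈x⌉ : ℤ) : ℝ) = f (⌈x⌉ : ℝ) := rfl
      linarith
    · exact tendsto_atBot_add_const_left _ _
        (tendsto_atBot_add_const_right _ _ tendsto_id)
  have hsurj : Function.Surjective f := hfc.surjective htop hbot
  -- Lemma A : if F z is real for z in the strip, then z is real
  have hA : ∀ z ∈ Strip ε, (F z).im = 0 → z.im = 0 := by
    intro z hz h0
    obtain ⟨x, hx⟩ := hsurj (F z).re
    have hFx : F (x : ℂ) = F z := by
      apply Complex.ext
      · exact hx
      · rw [hreal x, h0]
    have := hinj (hRe x) hz hFx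
    rw [← this]
    simp
  -- derivative facts
  have hdF : ∀ z ∈ Strip ε, HasDerivAt F (deriv F z) z := fun z hz =>
    (hF.differentiableAt (hS.mem_nhds hz)).hasDerivAt
  have hfd : ∀ x : ℝ, HasDerivAt f ((deriv F (x : ℂ)).re) x := by
    intro x
    have h1 : HasDerivAt (fun t : ℝ => F (t : ℂ)) (deriv F (x : ℂ)) x :=
      (hdF _ (hRe x)).comp_ofReal
    exact (Complex.reCLM.hasFDerivAt.comp_hasDerivAt x h1 :)
  -- there is a real point with nonzero derivative
  have hx0 : ∃ x0 : ℝ, deriv F (x0 : ℂ) ≠ 0 := by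
    by_contra h
    push_neg at h
    have hz : ∀ x : ℝ, deriv f x = 0 := fun x => by
      rw [(hfd x).deriv, h x, Complex.zero_re]
    have hdiff : Differentiable ℝ f := fun x => (hfd x).differentiableAt
    have hc := is_const_of_deriv_eq_zero hdiff hz 0 1
    exact (hmono (zero_lt_one : (0:ℝ) < 1)).ne hc
  obtain ⟨x0, hc0⟩ := hx0
  set c := deriv F (x0 : ℂ) with hc_def
  -- the derivative at x0 is real
  have hcim : c.im = 0 := by
    have h1 : HasDerivAt (fun t : ℝ => F (t : ℂ)) c x0 := (hdF _ (hRe x0)).comp_ofReal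
    have h2 : HasDerivAt (fun t : ℝ => (F (t : ℂ)).im) c.im x0 :=
      (Complex.imCLM.hasFDerivAt.comp_hasDerivAt x0 h1 :)
    have h3 : (fun t : ℝ => (F (t : ℂ)).im) = fun _ => (0:ℝ) := funext hreal
    rw [h3] at h2
    exact h2.unique (hasDerivAt_const _ _)
  -- the derivative at x0 is positive (real part)
  have hcre : 0 < c.re := by
    have hnn : 0 ≤ c.re := by
      have hs := hasDerivAt_iff_tendsto_slope.1 (hfd x0)
      refine ge_of_tendsto hs ?_
      refine eventually_nhdsWithin_of_forall ?_
      intro y hy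
      rcases lt_or_gt_of_ne (fun h => hy (h ▸ rfl) : y ≠ x0) with h | h
      · have h1 : f y - f x0 ≤ 0 := by have := hmonof h.le; linarith
        have h2 : y - x0 < 0 := by linarith
        rw [slope_def_field]
        rw [div_nonneg_iff]
        right
        exact ⟨h1, h2.le⟩
      · have h1 : 0 ≤ f y - f x0 := by have := hmonof h.le; linarith
        have h2 : 0 ≤ y - x0 := by linarith
        rw [slope_def_field]
        exact div_nonneg h1 h2
    rcases hnn.lt_or_eq with h | h
    · exact h
    · exfalso
      apply hc0
      apply Complex.ext
      · exact h.symm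
      · exact hcim
  -- the vertical path at x0
  set p : ℝ → ℂ := fun t => (x0 : ℂ) + (t : ℂ) * Complex.I with hp_def
  have hp0 : p 0 = (x0 : ℂ) := by simp [hp_def]
  have hpim : ∀ t : ℝ, (p t).im = t := by intro t; simp [hp_def]
  have hp : ∀ t : ℝ, HasDerivAt p Complex.I t := by
    intro t
    have h1 : HasDerivAt (fun t : ℝ => (t : ℂ)) 1 t := by
      simpa using (hasDerivAt_id t).ofReal_comp
    have h2 := (h1.mul_const Complex.I).const_add (x0 : ℂ)
    rw [one_mul] at h2; exact h2
  have hcomp : HasDerivAt (fun t : ℝ => F (p t)) (Complex.I * c) 0 := by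
    have hg : HasDerivAt F c (p 0) := by rw [hp0]; exact hdF _ (hRe x0)
    have := HasDerivAt.scomp (h := p) (x := (0:ℝ)) hg (hp 0)
    simpa [smul_eq_mul, Function.comp_def] using this
  have hh : HasDerivAt (fun t : ℝ => (F (p t)).im) c.re 0 := by
    have h2 : HasDerivAt (fun t : ℝ => (F (p t)).im) ((Complex.I * c).im) 0 :=
      (Complex.imCLM.hasFDerivAt.comp_hasDerivAt 0 hcomp :)
    have : (Complex.I * c).im = c.re := by
      simp [Complex.mul_im, hcim]
    rwa [this] at h2
  have hF0 : (F (p 0)).im = 0 := by rw [hp0]; exact hreal x0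
  -- find a point in the open upper strip where Im F > 0
  obtain ⟨t, hst, ht⟩ : ∃ t : ℝ, 0 < slope (fun t : ℝ => (F (p t)).im) 0 t ∧ t ∈ Ioo (0:ℝ) ε := by
    have hslope := hasDerivAt_iff_tendsto_slope.1 hh
    have hev : ∀ᶠ y in 𝓝[≠] (0:ℝ), 0 < slope (fun t : ℝ => (F (p t)).im) 0 y :=
      hslope.eventually_const_lt hcre
    have hev' : ∀ᶠ y in 𝓝[>] (0:ℝ), 0 < slope (fun t : ℝ => (F (p t)).im) 0 y :=
      hev.filter_mono (nhdsWithin_mono _ (fun y hy => ne_of_gt hy))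
    have hIoo : ∀ᶠ y in 𝓝[>] (0:ℝ), y ∈ Ioo (0:ℝ) ε :=
      eventually_of_mem (Ioo_mem_nhdsGT_of_mem ⟨le_refl 0, hε⟩) (fun y hy => hy)
    exact (hev'.and hIoo).exists
  have htpos : 0 < (F (p t)).im := by
    rw [slope_def_field, hF0, sub_zero, sub_zero] at hst
    have := mul_pos hst ht.1
    rwa [div_mul_cancel₀ _ (ne_of_gt ht.1)] at this
  -- Part 1
  have P1 : ∀ z : ℂ, 0 < z.im → z.im < ε → 0 ≤ (F z).im := by
    intro z h1 h2
    by_contra hneg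
    push_neg at hneg
    set U : Set ℂ := {z : ℂ | 0 < z.im ∧ z.im < ε} with hU_def
    have hsub : U ⊆ Strip ε := by
      intro u hu
      have := hu.1
      have := hu.2
      simp only [Strip, mem_setOf_eq, abs_lt]
      constructor <;> linarith [hu.1, hu.2]
    have hUconv : Convex ℝ U := by
      have : U = {z : ℂ | 0 < z.im} ∩ {z : ℂ | z.im < ε} := by
        ext u; simp [hU_def, and_comm]
      rw [this]
      exact (convex_halfSpace_im_gt 0).inter (convex_halfSpace_im_lt ε)
    have hgcont : ContinuousOn (fun z : ℂ => (F z).im) U :=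
      Complex.continuous_im.comp_continuousOn (hF.continuousOn.mono hsub)
    have hzU : z ∈ U := ⟨h1, h2⟩
    have hwU : p t ∈ U := by
      constructor <;> rw [hpim] <;> [exact ht.1; exact ht.2]
    have hIcc := hUconv.isPreconnected.intermediate_value hzU hwU hgcont
    have h0mem : (0:ℝ) ∈ Icc ((F z).im) ((F (p t)).im) := ⟨hneg.le, htpos.le⟩
    obtain ⟨u, huU, hgu⟩ := hIcc h0mem
    have := hA u (hsub huU) hgu
    exact absurd this (ne_of_gt huU.1)
  refine ⟨P1, ?_⟩
  intro ε' hε' hstrip ζ hζ hsum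
  set G : ℂ → ℂ := fun z => F z + ζ with hG_def
  have hζε : ζ.im < ε := by linarith
  have key : ∀ n : ℕ, 1 ≤ n → G^[n] 0 ∈ Strip ε ∧ ζ.im ≤ (G^[n] 0).im := by
    intro n hn
    induction n, hn using Nat.le_induction with
    | base =>
      have h0 : (F 0).im = 0 := by simpa using hreal 0
      have him : (G^[1] 0).im = ζ.im := by
        simp [hG_def, Complex.add_im, h0]
      constructor
      · show |(G^[1] 0).im| < ε
        rw [him, abs_of_pos hζ]
        exact hζε
      · rw [him]
    | succ n hn ih =>
      obtain ⟨hwS, hwim⟩ := ih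
      set w := G^[n] 0 with hw_def
      have hw1 : 0 < w.im := lt_of_lt_of_le hζ hwim
      have hw2 : w.im < ε := lt_of_abs_lt hwS
      have hFw : 0 ≤ (F w).im := P1 w hw1 hw2
      have hFw' : (F w).im < ε' := lt_of_abs_lt (hstrip w hwS)
      rw [Function.iterate_succ_apply', ← hw_def]
      constructor
      · show |(G w).im| < ε
        have : (G w).im = (F w).im + ζ.im := by simp [hG_def, Complex.add_im]
        rw [this, abs_of_pos (by linarith)]
        linarith
      · have : (G w).im = (F w).im + ζ.im := by simp [hG_def, Complex.add_im]
        rw [this]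
        linarith
  refine ⟨key, ζ.im, hζ, ?_⟩
  intro n hn
  calc ζ.im ≤ (G^[n] 0).im := (key n hn).2
    _ ≤ |(G^[n] 0).im| := le_abs_self _
    _ ≤ ‖G^[n] 0‖ := by exact Complex.abs_im_le_norm _
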